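/- There exist β > 0 and q₀ ∈ (0, 1/2) such that for every q ∈ (0, q₀) and every ζ with q < ζ < 2q satisfying D(ζ ‖ q) = D(ζ ‖ 2q), one has D(ζ ‖ q) ≥ β·q, where D denotes the binary Kullback–Leibler divergence in nats. -/

import Mathlib

/-- Binary Kullback–Leibler divergence in nats. -/
noncomputable def klBin (a b : ℝ) : ℝ :=
  a * Real.log (a / b) + (1 - a) * Real.log ((1 - a) / (1 - b))

lemma aux_log {x y : ℝ} (hx : 0 < x) (hy : 0 < y) :
    1 - y / x ≤ Real.log (x / y) := by
  have h := Real.log_le_sub_one_of_pos (div_pos hy hx)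
  rw [Real.log_div hy.ne' hx.ne'] at h
  rw [Real.log_div hx.ne' hy.ne']
  linarith

set_option maxHeartbeats 1000000 in
/-- Lower bound on the Chernoff/Sanov exponent at the ML threshold between
`Bernoulli(q)` and `Bernoulli(2q)`: there exist `β > 0` and `q₀ ∈ (0, 1/2)` such that
for every `q ∈ (0, q₀)` and every `ζ ∈ (q, 2q)` with `D(ζ ‖ q) = D(ζ ‖ 2q)`,
one has `D(ζ ‖ q) ≥ β q`. -/
theorem threshold_divergence_lower_bound :
    ∃ β : ℝ, 0 < β ∧ ∃ q₀ : ℝ, 0 < q₀ ∧ q₀ < 1 / 2 ∧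
      ∀ q ζ : ℝ, 0 < q → q < q₀ → q < ζ → ζ < 2 * q →
        klBin ζ q = klBin ζ (2 * q) → β * q ≤ klBin ζ q := by
  refine ⟨1/20, by norm_num, 1/250, by norm_num, by norm_num, ?_⟩
  intro q ζ hq hq0 hζ1 hζ2 hEq
  set L := Real.log 2 with hLdef
  have hL1 : (0.6931471803 : ℝ) < L := Real.log_two_gt_d9
  have hL2 : L < 0.6931471808 := Real.log_two_lt_d9
  set s := Real.sqrt 2 with hsdef
  have hs0 : 0 < s := Real.sqrt_pos.mpr (by norm_num)
  have hs2 : s ≤ 1.415 := by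
    have : s ≤ Real.sqrt (1.415 ^ 2) := Real.sqrt_le_sqrt (by norm_num)
    rwa [Real.sqrt_sq (by norm_num : (0:ℝ) ≤ 1.415)] at this
  have hs1 : 1 ≤ s := by
    have : Real.sqrt 1 ≤ s := Real.sqrt_le_sqrt (by norm_num)
    rwa [Real.sqrt_one] at this
  have hslog : Real.log s = L / 2 := by
    rw [hsdef, Real.log_sqrt (by norm_num : (0:ℝ) ≤ 2)]
  -- positivity facts
  have hζ0 : 0 < ζ := lt_trans hq hζ1
  have h1q : 0 < 1 - q := by linarith
  have h12q : 0 < 1 - 2 * q := by linarith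
  have h1ζ : 0 < 1 - ζ := by linarith
  -- Step A: ζ * log 2 = (1-ζ) * (log(1-q) - log(1-2q))
  have hA : ζ * L = (1 - ζ) * (Real.log (1 - q) - Real.log (1 - 2 * q)) := by
    unfold klBin at hEq
    rw [Real.log_div hζ0.ne' hq.ne',
        Real.log_div hζ0.ne' (by positivity : (2 * q : ℝ) ≠ 0),
        Real.log_div h1ζ.ne' h1q.ne',
        Real.log_div h1ζ.ne' h12q.ne',
        Real.log_mul (by norm_num : (2:ℝ) ≠ 0) hq.ne'] at hEq
    rw [hLdef]
    linear_combination hEq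
  -- Step B: q ≤ log(1-q) - log(1-2q)
  have hB : q ≤ Real.log (1 - q) - Real.log (1 - 2 * q) := by
    have h := aux_log h1q h12q
    rw [Real.log_div h1q.ne' h12q.ne'] at h
    have h2 : (1 - 2 * q) / (1 - q) ≤ 1 - q := by
      rw [div_le_iff₀ h1q]; nlinarith
    linarith
  -- Step C: s * q ≤ ζ
  have hC : s * q ≤ ζ := by
    have h1 : (1 - 2 * q) * q ≤ ζ * L := by
      have : (1 - ζ) * q ≤ (1 - ζ) * (Real.log (1 - q) - Real.log (1 - 2 * q)) :=
        mul_le_mul_of_nonneg_left hB h1ζ.le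
      nlinarith
    have hsl : s * L ≤ 1 - 2 * q := by nlinarith
    nlinarith
  -- Step D1: q - ζ ≤ (1-ζ) * log((1-ζ)/(1-q))
  have hD1 : q - ζ ≤ (1 - ζ) * Real.log ((1 - ζ) / (1 - q)) := by
    have h := aux_log h1ζ h1q
    have h2 := mul_le_mul_of_nonneg_left h h1ζ.le
    have e : (1 - ζ) * (1 - (1 - q) / (1 - ζ)) = q - ζ := by field_simp; ring
    linarith [e ▸ h2]
  -- Step D2: L/2 + 1 - s*q/ζ ≤ log(ζ/q)
  have hsq : 0 < s * q := mul_pos hs0 hq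
  have hD2 : L / 2 + 1 - s * q / ζ ≤ Real.log (ζ / q) := by
    have h := aux_log hζ0 hsq
    rw [Real.log_div hζ0.ne' hsq.ne', Real.log_mul hs0.ne' hq.ne', hslog] at h
    rw [Real.log_div hζ0.ne' hq.ne']
    linarith
  -- assemble
  have h3 : ζ * (L / 2 + 1 - s * q / ζ) ≤ ζ * Real.log (ζ / q) :=
    mul_le_mul_of_nonneg_left hD2 hζ0.le
  have e2 : ζ * (L / 2 + 1 - s * q / ζ) = ζ * L / 2 + ζ - s * q := by
    field_simp
  have h5 : s * q * L ≤ ζ * L := mul_le_mul_of_nonneg_right hC (by linarith)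
  have key : s * (2 - L) ≤ 1.9 := by nlinarith
  have key2 := mul_le_mul_of_nonneg_left key hq.le
  unfold klBin
  nlinarith [h3, e2, hD1, h5, key2]
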